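/- For the simplex S₂ ⊂ R³ with vertices (1/2,0,0), (1/2,1,0), (0,1/2,1), (1,1/2,1), one has ξ(S₂) = 3 and every vertex of the cube Q₃ = [0,1]³ lies on the boundary of the simplex 3S₂; i.e., S₂ is a perfect simplex. -/

import Mathlib

open Finset MeasureTheory

/-- The unit cube `[0,1]^n` in `ℝ^n`. -/
def unitCube (n : ℕ) : Set (Fin n → ℝ) := {x | ∀ i, 0 ≤ x i ∧ x i ≤ 1}

/-- The set of vertices of the unit cube, i.e. `{0,1}^n`. -/
def cubeVerts (n : ℕ) : Set (Fin n → ℝ) := {x | ∀ i, x i = 0 ∨ x i = 1}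

/-- The (solid) simplex spanned by `n+1` points. -/
def simplexSet {n : ℕ} (v : Fin (n + 1) → (Fin n → ℝ)) : Set (Fin n → ℝ) :=
  convexHull ℝ (Set.range v)

/-- The centroid (center of gravity) of the simplex with vertices `v`. -/
noncomputable def simplexCentroid {n : ℕ} (v : Fin (n + 1) → (Fin n → ℝ)) : Fin n → ℝ :=
  ((n : ℝ) + 1)⁻¹ • ∑ j, v j

/-- The homothety of the simplex with vertices `v`, with center the centroid and ratio `σ`. -/
noncomputable def homSimplex {n : ℕ} (v : Fin (n + 1) → (Fin n → ℝ)) (σ : ℝ) : Set (Fin n → ℝ) :=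
  (fun x => simplexCentroid v + σ • (x - simplexCentroid v)) '' simplexSet v

/-- `ξ(S) = min {σ ≥ 1 : Q_n ⊆ σS}`. -/
noncomputable def xiVal {n : ℕ} (v : Fin (n + 1) → (Fin n → ℝ)) : ℝ :=
  sInf {σ : ℝ | 1 ≤ σ ∧ unitCube n ⊆ homSimplex v σ}

/-- A function `ℝ^n → ℝ` is an affine polynomial of degree at most 1. -/
def IsAffinePoly {n : ℕ} (f : (Fin n → ℝ) → ℝ) : Prop :=
  ∃ a : Fin n → ℝ, ∃ b : ℝ, ∀ x, f x = ∑ i, a i * x i + b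

/-- `lam` is the family of basic Lagrange polynomials of the simplex with vertices `v`. -/
def IsLagrangeBasis {n : ℕ} (v : Fin (n + 1) → (Fin n → ℝ))
    (lam : Fin (n + 1) → (Fin n → ℝ) → ℝ) : Prop :=
  (∀ j, IsAffinePoly (lam j)) ∧ ∀ j k, lam j (v k) = if j = k then 1 else 0

/-- The `i`-th axial diameter of a set `S ⊆ ℝ^n`: the supremum of lengths of segments
in `S` parallel to the `i`-th coordinate axis. -/
noncomputable def axialDiam {n : ℕ} (S : Set (Fin n → ℝ)) (i : Fin n) : ℝ :=
  sSup {t : ℝ | ∃ x ∈ S, ∃ y ∈ S, (∀ k, k ≠ i → x k = y k) ∧ y i - x i = t}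

/-- The vertices of the simplex `S₂ ⊂ ℝ³`. -/
noncomputable def S2verts : Fin 4 → (Fin 3 → ℝ) :=
  ![![1/2, 0, 0], ![1/2, 1, 0], ![0, 1/2, 1], ![1, 1/2, 1]]

-- Lagrange coordinates
noncomputable def lam0 (x : Fin 3 → ℝ) : ℝ := 1 - x 1 - x 2 / 2
noncomputable def lam1 (x : Fin 3 → ℝ) : ℝ := x 1 - x 2 / 2
noncomputable def lam2 (x : Fin 3 → ℝ) : ℝ := 1/2 - x 0 + x 2 / 2
noncomputable def lam3 (x : Fin 3 → ℝ) : ℝ := x 0 - 1/2 + x 2 / 2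

lemma centroid_eq : simplexCentroid S2verts = fun _ => 1/2 := by
  funext i
  fin_cases i <;>
    simp [simplexCentroid, S2verts, Fin.sum_univ_four, Matrix.cons_val_zero, Matrix.cons_val_one,
      Matrix.vecHead, Matrix.vecTail] <;> norm_num

lemma simplex_eq : simplexSet S2verts =
    {x | 0 ≤ lam0 x ∧ 0 ≤ lam1 x ∧ 0 ≤ lam2 x ∧ 0 ≤ lam3 x} := by
  apply Set.Subset.antisymm
  · apply convexHull_min
    · rw [Set.range_subset_iff]
      intro j
      fin_cases j <;>
        simp [S2verts, lam0, lam1, lam2, lam3] <;> norm_num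
    · intro x hx y hy a b ha hb hab
      obtain ⟨hx0, hx1, hx2, hx3⟩ := hx
      obtain ⟨hy0, hy1, hy2, hy3⟩ := hy
      refine ⟨?_, ?_, ?_, ?_⟩ <;>
        simp only [lam0, lam1, lam2, lam3, Pi.add_apply, Pi.smul_apply, smul_eq_mul] at * <;>
        nlinarith
  · rintro x ⟨h0, h1, h2, h3⟩
    have hsum : ∑ j, (![lam0 x, lam1 x, lam2 x, lam3 x]) j = 1 := by
      simp [Fin.sum_univ_four, lam0, lam1, lam2, lam3]; ring
    have hx : x = Finset.univ.centerMass ![lam0 x, lam1 x, lam2 x, lam3 x] S2verts := by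
      rw [Finset.centerMass, hsum]
      funext i
      simp only [inv_one, one_smul, S2verts, Fin.sum_univ_four, Pi.add_apply, Pi.smul_apply,
        smul_eq_mul]
      fin_cases i <;>
        simp [lam0, lam1, lam2, lam3, Matrix.cons_val_zero, Matrix.cons_val_one,
          Matrix.vecHead, Matrix.vecTail] <;> ring
    rw [hx]
    apply Finset.centerMass_mem_convexHull
    · intro j _
      fin_cases j <;> simpa
    · rw [hsum]; norm_num
    · intro j _; exact Set.mem_range_self j

lemma hom_eq {σ : ℝ} (hσ : 0 < σ) : homSimplex S2verts σ =
    {y | (1-σ)/4 ≤ lam0 y ∧ (1-σ)/4 ≤ lam1 y ∧ (1-σ)/4 ≤ lam2 y ∧ (1-σ)/4 ≤ lam3 y} := by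
  have hc := centroid_eq
  ext y
  constructor
  · rintro ⟨x, hx, rfl⟩
    rw [simplex_eq] at hx
    obtain ⟨h0, h1, h2, h3⟩ := hx
    refine ⟨?_, ?_, ?_, ?_⟩ <;>
      simp only [lam0, lam1, lam2, lam3, hc, Pi.add_apply, Pi.smul_apply, Pi.sub_apply,
        smul_eq_mul] at * <;> nlinarith
  · rintro ⟨h0, h1, h2, h3⟩
    have hσ' : 0 < σ⁻¹ := inv_pos.mpr hσ
    have hσσ : σ⁻¹ * σ = 1 := inv_mul_cancel₀ hσ.ne'
    refine ⟨fun i => 1/2 + σ⁻¹ * (y i - 1/2), ?_, ?_⟩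
    · rw [simplex_eq]
      refine ⟨?_, ?_, ?_, ?_⟩ <;>
        simp only [lam0, lam1, lam2, lam3] at * <;>
        nlinarith [mul_le_mul_of_nonneg_left h0 hσ'.le, mul_le_mul_of_nonneg_left h1 hσ'.le,
          mul_le_mul_of_nonneg_left h2 hσ'.le, mul_le_mul_of_nonneg_left h3 hσ'.le]
    · funext i
      simp only [hc, Pi.add_apply, Pi.smul_apply, Pi.sub_apply, smul_eq_mul]
      field_simp
      ring

lemma not_interior_of_dir {K : Set (Fin 3 → ℝ)} {w d : Fin 3 → ℝ}
    (h : ∀ t : ℝ, 0 < t → w + t • d ∉ K) : w ∉ interior K := by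
  intro hw
  have h1 : Continuous (fun t : ℝ => w + t • d) := by continuity
  have h0 : (fun t : ℝ => w + t • d) 0 = w := by simp
  have h2 : (fun t : ℝ => w + t • d) ⁻¹' K ∈ nhds (0:ℝ) := by
    apply h1.continuousAt.preimage_mem_nhds
    simpa using mem_interior_iff_mem_nhds.mp hw
  obtain ⟨ε, hε, hb⟩ := Metric.mem_nhds_iff.mp h2
  have hmem : (ε/2) ∈ Metric.ball (0:ℝ) ε := by
    rw [Metric.mem_ball, Real.dist_eq, sub_zero, abs_of_pos (by linarith : (0:ℝ) < ε/2)]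
    linarith
  exact h (ε/2) (by linarith) (hb hmem)

/-- `ξ(S₂) = 3` and every vertex of `Q₃` lies on the boundary of `3S₂`,
i.e. `S₂` is a perfect simplex. -/
theorem S2_perfect :
    xiVal S2verts = 3 ∧
    ∀ w ∈ cubeVerts 3, w ∈ frontier (homSimplex S2verts 3) := by
  have h3 : (0:ℝ) < 3 := by norm_num
  have h3mem : (3:ℝ) ∈ {σ : ℝ | 1 ≤ σ ∧ unitCube 3 ⊆ homSimplex S2verts σ} := by
    refine ⟨by norm_num, ?_⟩
    intro y hy
    rw [hom_eq h3]
    obtain ⟨a0, b0⟩ := hy 0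
    obtain ⟨a1, b1⟩ := hy 1
    obtain ⟨a2, b2⟩ := hy 2
    refine ⟨?_, ?_, ?_, ?_⟩ <;> simp only [lam0, lam1, lam2, lam3] <;> linarith
  have hlb : ∀ σ ∈ {σ : ℝ | 1 ≤ σ ∧ unitCube 3 ⊆ homSimplex S2verts σ}, (3:ℝ) ≤ σ := by
    rintro σ ⟨h1σ, hsub⟩
    have hone : (fun _ => 1 : Fin 3 → ℝ) ∈ unitCube 3 := fun i => ⟨zero_le_one, le_refl 1⟩
    have := hsub hone
    rw [hom_eq (lt_of_lt_of_le one_pos h1σ)] at this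
    obtain ⟨c0, -⟩ := this
    simp only [lam0] at c0
    linarith
  constructor
  · exact le_antisymm (csInf_le ⟨3, hlb⟩ h3mem) (le_csInf ⟨3, h3mem⟩ hlb)
  · intro w hw
    rw [hom_eq h3]
    set K : Set (Fin 3 → ℝ) :=
      {y | (1-3)/4 ≤ lam0 y ∧ (1-3)/4 ≤ lam1 y ∧ (1-3)/4 ≤ lam2 y ∧ (1-3)/4 ≤ lam3 y} with hK
    have hcl : IsClosed K := by
      rw [hK, Set.setOf_and, Set.setOf_and, Set.setOf_and]
      have c0 : Continuous lam0 := by unfold lam0; continuity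
      have c1 : Continuous lam1 := by unfold lam1; continuity
      have c2 : Continuous lam2 := by unfold lam2; continuity
      have c3 : Continuous lam3 := by unfold lam3; continuity
      exact (isClosed_le continuous_const c0).inter ((isClosed_le continuous_const c1).inter
        ((isClosed_le continuous_const c2).inter (isClosed_le continuous_const c3)))
    have hmem : w ∈ K := by
      rcases hw 0 with h0|h0 <;> rcases hw 1 with h1|h1 <;> rcases hw 2 with h2|h2 <;>
        exact ⟨by simp [lam0, h0, h1, h2]; norm_num, by simp [lam1, h0, h1, h2]; norm_num,
          by simp [lam2, h0, h1, h2]; norm_num, by simp [lam3, h0, h1, h2]; norm_num⟩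
    have hnotint : w ∉ interior K := by
      rcases hw 2 with h2|h2
      · rcases hw 0 with h0|h0
        · -- lam3 w = -1/2, direction -e0
          apply not_interior_of_dir (d := ![-1, 0, 0])
          rintro t ht ⟨-, -, -, hc⟩
          simp only [lam3, Pi.add_apply, Pi.smul_apply, smul_eq_mul, Matrix.cons_val_zero,
            Matrix.cons_val_two, Matrix.tail_cons, Matrix.head_cons, h0, h2] at hc
          linarith
        · -- lam2 w = -1/2, direction e0
          apply not_interior_of_dir (d := ![1, 0, 0])
          rintro t ht ⟨-, -, hc, -⟩
          simp only [lam2, Pi.add_apply, Pi.smul_apply, smul_eq_mul, Matrix.cons_val_zero,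
            Matrix.cons_val_two, Matrix.tail_cons, Matrix.head_cons, h0, h2] at hc
          linarith
      · rcases hw 1 with h1|h1
        · -- lam1 w = -1/2, direction -e1
          apply not_interior_of_dir (d := ![0, -1, 0])
          rintro t ht ⟨-, hc, -, -⟩
          simp only [lam1, Pi.add_apply, Pi.smul_apply, smul_eq_mul, Matrix.cons_val_one, Matrix.cons_val_zero,
            Matrix.cons_val_two, Matrix.tail_cons, Matrix.head_cons, h1, h2] at hc
          linarith
        · -- lam0 w = -1/2, direction e1
          apply not_interior_of_dir (d := ![0, 1, 0])
          rintro t ht ⟨hc, -, -, -⟩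
          simp only [lam0, Pi.add_apply, Pi.smul_apply, smul_eq_mul, Matrix.cons_val_one, Matrix.cons_val_zero,
            Matrix.cons_val_two, Matrix.tail_cons, Matrix.head_cons, h1, h2] at hc
          linarith
    rw [frontier, hcl.closure_eq]
    exact ⟨hmem, hnotint⟩
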